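/- For all α ∈ (0, 1/2), the flipped α-continued fraction map satisfies the matching identity T_α(α) = T_α²(1-α). -/

import Mathlib

open Set MeasureTheory Filter Topology
open scoped Classical

/-- The Gauss map `G(x) = 1/x - ⌊1/x⌋`. -/
noncomputable def gauss (x : ℝ) : ℝ := Int.fract (1 / x)

/-- The flipped region `D_α = ⋃_{n ≥ 1} [1/(n+α), 1/n]`. -/
def Dset (α : ℝ) : Set ℝ := ⋃ n : ℕ, Set.Icc (1 / ((n : ℝ) + 1 + α)) (1 / ((n : ℝ) + 1))

/-- The flipped α-continued fraction map `T_α`. -/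
noncomputable def T (α x : ℝ) : ℝ := if x ∈ Dset α then 1 - gauss x else gauss x

lemma mem_Dset_iff (α x : ℝ) (hα0 : 0 < α) (hα1 : α < 1) (hx0 : 0 < x) (hx1 : x ≤ 1) :
    x ∈ Dset α ↔ Int.fract (1/x) ≤ α := by
  constructor
  · intro hmem
    obtain ⟨n, h1, h2⟩ := by simpa only [Dset, mem_iUnion, mem_Icc] using hmem
    have hn1 : (0:ℝ) < (n:ℝ) + 1 := by positivity
    have hn2 : (0:ℝ) < (n:ℝ) + 1 + α := by positivity
    have ha : (n:ℝ) + 1 ≤ 1/x := by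
      rw [le_div_iff₀ hx0]
      have := (le_div_iff₀ hn1).1 h2
      nlinarith
    have hb : 1/x ≤ (n:ℝ) + 1 + α := by
      rw [div_le_iff₀ hx0]
      have := (div_le_iff₀ (by positivity : (0:ℝ) < (n:ℝ)+1+α)).1 h1
      nlinarith
    have hfl : ⌊1/x⌋ = (n:ℤ) + 1 := by
      rw [Int.floor_eq_iff]
      constructor
      · push_cast; linarith
      · push_cast; linarith
    rw [Int.fract, hfl]
    push_cast
    linarith
  · intro h
    have h1 : (1:ℝ) ≤ 1/x := by rw [le_div_iff₀ hx0]; linarith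
    have hm1 : 1 ≤ ⌊1/x⌋ := by exact_mod_cast Int.le_floor.2 (by exact_mod_cast h1)
    have hmr : (1:ℝ) ≤ (⌊1/x⌋ : ℝ) := by exact_mod_cast hm1
    have hfl : (⌊1/x⌋ : ℝ) ≤ 1/x := Int.floor_le _
    have hfr : 1/x ≤ (⌊1/x⌋ : ℝ) + α := by
      have := Int.fract (1/x)
      have hd : Int.fract (1/x) = 1/x - ⌊1/x⌋ := rfl
      linarith [h, hd ▸ h]
    refine mem_iUnion.2 ⟨(⌊1/x⌋ - 1).toNat, ?_⟩
    have hcast : (((⌊1/x⌋ - 1).toNat : ℕ) : ℝ) + 1 = (⌊1/x⌋ : ℝ) := by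
      have h3 : ((⌊1/x⌋ - 1).toNat : ℤ) = ⌊1/x⌋ - 1 := Int.toNat_of_nonneg (by omega)
      have h4 : (((⌊1/x⌋ - 1).toNat : ℕ) : ℝ) = ((⌊1/x⌋ : ℝ)) - 1 := by exact_mod_cast h3
      rw [h4]; ring
    have hxx : x * (1/x) = 1 := by field_simp
    rw [mem_Icc, hcast]
    constructor
    · rw [div_le_iff₀ (by linarith)]
      nlinarith [mul_le_mul_of_nonneg_left hfr hx0.le]
    · rw [le_div_iff₀ (by linarith)]
      nlinarith [mul_le_mul_of_nonneg_left hfl hx0.le]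
lemma T_eq (α x : ℝ) (hα0 : 0 < α) (hα1 : α < 1) (hx0 : 0 < x) (hx1 : x ≤ 1) :
    T α x = if Int.fract (1/x) ≤ α then 1 - Int.fract (1/x) else Int.fract (1/x) := by
  unfold T gauss
  simp only [mem_Dset_iff α x hα0 hα1 hx0 hx1]

/-- matching identity `T_α(α) = T_α²(1-α)` for `α ∈ (0,1/2)`. -/
theorem stmt_1 (α : ℝ) (hα : α ∈ Set.Ioo (0:ℝ) (1/2)) :
    T α α = T α (T α (1 - α)) := by
  obtain ⟨hα0, hα2⟩ := hα
  have hα1 : α < 1 := by linarith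
  have h1α : (0:ℝ) < 1 - α := by linarith
  -- 1 - α ∉ Dset α
  have hnot : (1 - α) ∉ Dset α := by
    intro hmem
    obtain ⟨n, h1, h2⟩ := by simpa only [Dset, mem_iUnion, mem_Icc] using hmem
    rcases Nat.eq_zero_or_pos n with hn | hn
    · subst hn
      simp only [Nat.cast_zero, zero_add] at h1
      have := (div_le_iff₀ (by linarith : (0:ℝ) < 1 + α)).1 h1
      nlinarith
    · have hn1 : (1:ℝ) ≤ (n:ℝ) := by exact_mod_cast hn
      have := (le_div_iff₀ (by positivity : (0:ℝ) < (n:ℝ) + 1)).1 h2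
      nlinarith
  -- T α (1-α) = α / (1-α)
  have hg : T α (1 - α) = α / (1 - α) := by
    rw [T, if_neg hnot, gauss]
    have hfl : ⌊1/(1-α)⌋ = 1 := by
      rw [Int.floor_eq_iff]
      constructor
      · rw [le_div_iff₀ h1α]; push_cast; linarith
      · rw [div_lt_iff₀ h1α]; push_cast; linarith
    rw [Int.fract, hfl]
    push_cast
    field_simp
    ring
  rw [hg]
  have hy0 : 0 < α / (1 - α) := by positivity
  have hy1 : α / (1 - α) ≤ 1 := by
    rw [div_le_one h1α]; linarith
  rw [T_eq α α hα0 hα1 hα0 (by linarith),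
      T_eq α (α / (1 - α)) hα0 hα1 hy0 hy1]
  have hinv : 1 / (α / (1 - α)) = 1/α - 1 := by field_simp
  rw [hinv]
  have hfr : Int.fract (1/α - 1) = Int.fract (1/α) := by
    have := Int.fract_sub_intCast (1/α) 1
    simpa using this
  rw [hfr]
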